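/- Let R be a finite direct product of fields over Q realized as Q[z_1,...,z_n]/⟨T⟩ for a radical zero-dimensional triangular set T, and let a, b ∈ R[x] with componentwise gcd g. Then only finitely many primes p are unlucky, i.e., for all but finitely many primes p, the reduction of g mod p remains a componentwise greatest common divisor of a mod p and b mod p. -/

import Mathlib

open MvPolynomial

/-- `f` is monic of positive degree in the variable `i`. -/
def MonicInVar {k : Type*} [CommRing k] {n : ℕ} (f : MvPolynomial (Fin n) k) (i : Fin n) : Prop :=
  ∃ (d : ℕ) (r : MvPolynomial (Fin n) k), 0 < d ∧ degreeOf i r < d ∧ f = X i ^ d + r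

/-- `t` is a (zero-dimensional) triangular set. -/
def IsTriangularSet {k : Type*} [CommRing k] {n : ℕ}
    (t : Fin n → MvPolynomial (Fin n) k) : Prop :=
  ∀ i, MonicInVar (t i) i ∧ (∀ j, i < j → degreeOf j (t i) = 0) ∧
    ∀ j, j < i → degreeOf j (t i) < degreeOf j (t j)

/-- Reduction of a rational number modulo `p`. -/
noncomputable def redQ (p : ℕ) (q : ℚ) : ZMod p :=
  (q.num : ZMod p) * (q.den : ZMod p)⁻¹

/-- Coefficientwise reduction of a multivariate rational polynomial modulo `p`. -/
noncomputable def redMv (p : ℕ) {n : ℕ} (f : MvPolynomial (Fin n) ℚ) :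
    MvPolynomial (Fin n) (ZMod p) :=
  ∑ m ∈ f.support, monomial m (redQ p (coeff m f))

/-- Coefficientwise reduction modulo `p` of a univariate polynomial over `ℚ[z_1,…,z_n]`. -/
noncomputable def redPolyX (p : ℕ) {n : ℕ} (f : Polynomial (MvPolynomial (Fin n) ℚ)) :
    Polynomial (MvPolynomial (Fin n) (ZMod p)) :=
  ∑ m ∈ f.support, Polynomial.C (redMv p (f.coeff m)) * Polynomial.X ^ m

/-- `g` divides `a` modulo the ideal `J` of the coefficient ring. -/
def DvdMod {C : Type*} [CommRing C] (J : Ideal C) (g a : Polynomial C) : Prop :=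
  ∃ q : Polynomial C, a - g * q ∈ Ideal.map (Polynomial.C : C →+* Polynomial C) J

/-- `g` is a (componentwise) greatest common divisor of `a` and `b` modulo `J`. -/
def IsGcdMod {C : Type*} [CommRing C] (J : Ideal C) (a b g : Polynomial C) : Prop :=
  DvdMod J g a ∧ DvdMod J g b ∧ ∀ d : Polynomial C, DvdMod J d a → DvdMod J d b → DvdMod J d g

lemma redQ_zero (p : ℕ) : redQ p 0 = 0 := by simp [redQ]

lemma coeff_redMv (p : ℕ) {n : ℕ} (f : MvPolynomial (Fin n) ℚ) (m : Fin n →₀ ℕ) :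
    coeff m (redMv p f) = redQ p (coeff m f) := by
  classical
  rw [redMv]
  by_cases hm : m ∈ f.support
  · rw [coeff_sum, Finset.sum_eq_single m]
    · simp [coeff_monomial]
    · intro b hb hbm
      rw [coeff_monomial, if_neg hbm]
    · intro h; exact absurd hm h
  · have : coeff m f = 0 := by simpa [mem_support_iff, not_not] using hm
    rw [this, redQ_zero]
    rw [coeff_sum]
    apply Finset.sum_eq_zero
    intro b hb
    have hbm : b ≠ m := by rintro rfl; exact hm hb
    simp [coeff_monomial, hbm]

lemma redMv_zero (p : ℕ) {n : ℕ} : redMv p (0 : MvPolynomial (Fin n) ℚ) = 0 := by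
  simp [redMv]

lemma coeff_redPolyX (p : ℕ) {n : ℕ} (f : Polynomial (MvPolynomial (Fin n) ℚ)) (k : ℕ) :
    (redPolyX p f).coeff k = redMv p (f.coeff k) := by
  classical
  rw [redPolyX]
  by_cases hk : k ∈ f.support
  · rw [Polynomial.finset_sum_coeff, Finset.sum_eq_single k]
    · simp [Polynomial.coeff_C_mul, Polynomial.coeff_X_pow]
    · intro b hb hbk
      rw [Polynomial.coeff_C_mul, Polynomial.coeff_X_pow, if_neg (Ne.symm hbk), mul_zero]
    · intro h; exact absurd hk h
  · have : f.coeff k = 0 := by simpa using hk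
    rw [this, redMv_zero, Polynomial.finset_sum_coeff]
    apply Finset.sum_eq_zero
    intro b hb
    have hbk : b ≠ k := by rintro rfl; exact hk (by simpa using hb)
    rw [Polynomial.coeff_C_mul, Polynomial.coeff_X_pow, if_neg (Ne.symm hbk), mul_zero]

lemma redPolyX_C (p : ℕ) {n : ℕ} (f : MvPolynomial (Fin n) ℚ) :
    redPolyX p (Polynomial.C f) = Polynomial.C (redMv p f) := by
  ext k
  rw [coeff_redPolyX]
  rcases eq_or_ne k 0 with rfl | hk
  · simp
  · simp [Polynomial.coeff_C, hk, redMv_zero]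

section B
variable {n : ℕ}

lemma pmap_nsmul {R S : Type*} [CommRing R] [CommRing S] (ψ : R →+* S) (E : ℕ)
    (F : Polynomial R) : Polynomial.map ψ (E • F) = E • Polynomial.map ψ F := by
  rw [← Polynomial.coe_mapRingHom, map_nsmul]

lemma intlift_mv (f : MvPolynomial (Fin n) ℚ) :
    ∃ D : ℕ, 0 < D ∧ ∃ F : MvPolynomial (Fin n) ℤ,
      (D : ℕ) • f = MvPolynomial.map (Int.castRingHom ℚ) F := by
  induction f using MvPolynomial.induction_on' with
  | monomial m c =>
    refine ⟨c.den, c.pos, monomial m c.num, ?_⟩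
    rw [map_monomial, smul_monomial]
    congr 1
    rw [nsmul_eq_mul]
    push_cast
    rw [mul_comm]
    exact_mod_cast Rat.mul_den_eq_num c
  | add f g hf hg =>
    obtain ⟨D1, hD1, F1, h1⟩ := hf
    obtain ⟨D2, hD2, F2, h2⟩ := hg
    refine ⟨D1 * D2, Nat.mul_pos hD1 hD2, D2 • F1 + D1 • F2, ?_⟩
    rw [map_add, map_nsmul, map_nsmul, ← h1, ← h2]
    rw [smul_add, mul_smul, mul_smul, smul_comm D1 D2 f]

lemma intlift_poly (f : Polynomial (MvPolynomial (Fin n) ℚ)) :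
    ∃ D : ℕ, 0 < D ∧ ∃ F : Polynomial (MvPolynomial (Fin n) ℤ),
      (D : ℕ) • f = Polynomial.map (MvPolynomial.map (Int.castRingHom ℚ)) F := by
  induction f using Polynomial.induction_on' with
  | monomial k a =>
    obtain ⟨D, hD, F, hF⟩ := intlift_mv a
    refine ⟨D, hD, Polynomial.monomial k F, ?_⟩
    rw [Polynomial.map_monomial, ← hF, Polynomial.smul_monomial]
  | add f g hf hg =>
    obtain ⟨D1, hD1, F1, h1⟩ := hf
    obtain ⟨D2, hD2, F2, h2⟩ := hg
    refine ⟨D1 * D2, Nat.mul_pos hD1 hD2, D2 • F1 + D1 • F2, ?_⟩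
    rw [Polynomial.map_add, pmap_nsmul, pmap_nsmul, ← h1, ← h2]
    rw [smul_add, mul_smul, mul_smul, smul_comm D1 D2 f]

lemma intlift_scale {D E : ℕ} {f : Polynomial (MvPolynomial (Fin n) ℚ)}
    {F : Polynomial (MvPolynomial (Fin n) ℤ)}
    (h : (D : ℕ) • f = Polynomial.map (MvPolynomial.map (Int.castRingHom ℚ)) F) :
    (E * D) • f = Polynomial.map (MvPolynomial.map (Int.castRingHom ℚ)) (E • F) := by
  rw [pmap_nsmul, ← h, mul_smul]

lemma intlift_scale_mv {D E : ℕ} {f : MvPolynomial (Fin n) ℚ}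
    {F : MvPolynomial (Fin n) ℤ}
    (h : (D : ℕ) • f = MvPolynomial.map (Int.castRingHom ℚ) F) :
    (E * D) • f = MvPolynomial.map (Int.castRingHom ℚ) (E • F) := by
  rw [map_nsmul, ← h, mul_smul]

lemma intlift_list (l : List (Polynomial (MvPolynomial (Fin n) ℚ))) :
    ∃ D : ℕ, 0 < D ∧ ∀ f ∈ l, ∃ F : Polynomial (MvPolynomial (Fin n) ℤ),
      (D : ℕ) • f = Polynomial.map (MvPolynomial.map (Int.castRingHom ℚ)) F := by
  induction l with
  | nil => exact ⟨1, Nat.one_pos, by simp⟩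
  | cons f l ih =>
    obtain ⟨D1, hD1, F1, h1⟩ := intlift_poly f
    obtain ⟨D2, hD2, h2⟩ := ih
    refine ⟨D2 * D1, Nat.mul_pos hD2 hD1, ?_⟩
    intro g hg
    rcases List.mem_cons.mp hg with rfl | hgl
    · exact ⟨D2 • F1, intlift_scale h1⟩
    · obtain ⟨F, hF⟩ := h2 g hgl
      rw [mul_comm]
      exact ⟨D1 • F, intlift_scale hF⟩

end B

lemma redQ_good {p D : ℕ} (hp : p.Prime) (hpD : ¬ p ∣ D) (hD : 0 < D)
    {q : ℚ} {m : ℤ} (h : (D : ℚ) * q = (m : ℚ)) :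
    (D : ZMod p) * redQ p q = (m : ZMod p) := by
  haveI : Fact p.Prime := ⟨hp⟩
  have hden : (q.den : ℚ) ≠ 0 := by exact_mod_cast q.den_nz
  have hq : (q.num : ℚ) = q * q.den := by
    exact_mod_cast (Rat.mul_den_eq_num q).symm
  have hZQ : (q.num : ℚ) * D = (m : ℚ) * q.den := by
    rw [hq, mul_right_comm, mul_comm q (D : ℚ), h]
  have hZ : q.num * (D : ℤ) = m * (q.den : ℤ) := by exact_mod_cast hZQ
  have hdvd : (q.den : ℤ) ∣ q.num * (D : ℤ) := ⟨m, by linarith [hZ]⟩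
  have hdvdN : q.den ∣ q.num.natAbs * D := by
    have := Int.natAbs_dvd_natAbs.mpr hdvd
    simpa [Int.natAbs_mul] using this
  have hcop : Nat.Coprime q.den q.num.natAbs := (q.reduced).symm
  have hdenD : q.den ∣ D := Nat.Coprime.dvd_of_dvd_mul_left hcop hdvdN
  have hpden : ¬ p ∣ q.den := fun hc => hpD (hc.trans hdenD)
  have hdenu : (q.den : ZMod p) ≠ 0 := by
    rw [Ne, ZMod.natCast_eq_zero_iff]
    exact hpden
  have hZmod : (q.num : ZMod p) * (D : ZMod p) = (m : ZMod p) * (q.den : ZMod p) := by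
    exact_mod_cast congrArg (Int.cast : ℤ → ZMod p) hZ
  rw [redQ]
  field_simp
  linear_combination hZmod

lemma redMv_good {p D : ℕ} (hp : p.Prime) (hpD : ¬ p ∣ D) (hD : 0 < D) {n : ℕ}
    {f : MvPolynomial (Fin n) ℚ} {F : MvPolynomial (Fin n) ℤ}
    (h : (D : ℕ) • f = MvPolynomial.map (Int.castRingHom ℚ) F) :
    (D : ℕ) • redMv p f = MvPolynomial.map (Int.castRingHom (ZMod p)) F := by
  apply MvPolynomial.ext
  intro m
  have hc := congrArg (coeff m) h
  rw [MvPolynomial.coeff_smul, MvPolynomial.coeff_map] at hc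
  rw [MvPolynomial.coeff_smul, MvPolynomial.coeff_map, coeff_redMv]
  rw [nsmul_eq_mul] at hc ⊢
  exact redQ_good hp hpD hD (by exact_mod_cast hc)

lemma redPolyX_good {p D : ℕ} (hp : p.Prime) (hpD : ¬ p ∣ D) (hD : 0 < D) {n : ℕ}
    {f : Polynomial (MvPolynomial (Fin n) ℚ)} {F : Polynomial (MvPolynomial (Fin n) ℤ)}
    (h : (D : ℕ) • f = Polynomial.map (MvPolynomial.map (Int.castRingHom ℚ)) F) :
    (D : ℕ) • redPolyX p f = Polynomial.map (MvPolynomial.map (Int.castRingHom (ZMod p))) F := by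
  apply Polynomial.ext
  intro k
  have hc := congrArg (fun u => Polynomial.coeff u k) h
  simp only [Polynomial.coeff_smul, Polynomial.coeff_map] at hc
  rw [Polynomial.coeff_smul, Polynomial.coeff_map, coeff_redPolyX]
  exact redMv_good hp hpD hD (by exact_mod_cast hc)

lemma dvdMod_iff {C : Type*} [CommRing C] (J : Ideal C) (g a : Polynomial C) :
    DvdMod J g a ↔
      Polynomial.map (Ideal.Quotient.mk J) g ∣ Polynomial.map (Ideal.Quotient.mk J) a := by
  have hker : RingHom.ker (Polynomial.mapRingHom (Ideal.Quotient.mk J)) =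
      Ideal.map (Polynomial.C : C →+* Polynomial C) J := by
    rw [Polynomial.ker_mapRingHom, Ideal.mk_ker]
  constructor
  · rintro ⟨q, hq⟩
    rw [← hker, RingHom.mem_ker, map_sub, sub_eq_zero] at hq
    exact ⟨Polynomial.map (Ideal.Quotient.mk J) q, by simpa using hq⟩
  · rintro ⟨h, hh⟩
    obtain ⟨q, rfl⟩ := Polynomial.map_surjective _ Ideal.Quotient.mk_surjective h
    refine ⟨q, ?_⟩
    rw [← hker, RingHom.mem_ker, map_sub, sub_eq_zero]
    simpa using hh

section E
variable {n : ℕ} {R : Type} [CommRing R] [Algebra ℚ R]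

set_option maxHeartbeats 1000000 in
theorem integral_of_triangular (t : Fin n → MvPolynomial (Fin n) ℚ)
    (ht : IsTriangularSet t) (π : MvPolynomial (Fin n) ℚ →ₐ[ℚ] R)
    (hzero : ∀ i, π (t i) = 0) :
    ∀ i : ℕ, ∀ j : Fin n, (j : ℕ) < i → IsIntegral ℚ (π (X j)) := by
  classical
  intro i
  induction i with
  | zero => exact fun j hj => absurd hj (by omega)
  | succ i IH =>
    intro j hj
    rcases Nat.lt_or_ge (j : ℕ) i with hlow | hge
    · exact IH j hlow
    have hji : (j : ℕ) = i := by omega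
    set s : Set R := (fun k : Fin n => π (X k)) '' {k | k < j} with hs
    set S := Algebra.adjoin ℚ s with hSdef
    have hints : ∀ x ∈ s, IsIntegral ℚ x := by
      rintro x ⟨k, hk, rfl⟩
      have hk' : (k : ℕ) < (j : ℕ) := hk
      exact IH k (by omega)
    haveI hSfin : Module.Finite ℚ S :=
      ⟨(Subalgebra.toSubmodule S).fg_top.mpr <| fg_adjoin_of_finite (Set.toFinite s) hints⟩
    haveI : Algebra.IsIntegral ℚ S := Algebra.IsIntegral.of_finite ℚ S
    obtain ⟨⟨d, r, hd, hrd, htj⟩, hhigh, _⟩ := ht j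
    set gv : Fin n → Polynomial S := fun k =>
      if hk : k < j then Polynomial.C ⟨π (X k), Algebra.subset_adjoin ⟨k, hk, rfl⟩⟩
      else if k = j then Polynomial.X else 0 with hgv
    set φ : MvPolynomial (Fin n) ℚ →+* Polynomial S :=
      eval₂Hom ((Polynomial.C : S →+* Polynomial S).comp (algebraMap ℚ S)) gv with hφ
    have heval : ∀ f : MvPolynomial (Fin n) ℚ,
        (∀ m ∈ f.support, ∀ k : Fin n, j < k → m k = 0) →
        Polynomial.aeval (π (X j)) (φ f) = π f := by
      intro f hf
      have hmono : ∀ m ∈ f.support,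
          Polynomial.aeval (π (X j)) (φ (monomial m (coeff m f)))
            = π (monomial m (coeff m f)) := by
        intro m hm
        rw [hφ, eval₂Hom_monomial, map_mul]
        have hC : (Polynomial.aeval (π (X j)))
            (((Polynomial.C : S →+* Polynomial S).comp (algebraMap ℚ S)) (coeff m f))
            = algebraMap ℚ R (coeff m f) := by
          rw [RingHom.comp_apply, Polynomial.aeval_C, ← IsScalarTower.algebraMap_apply]
        rw [hC]
        have hprod : (Polynomial.aeval (π (X j))) (m.prod fun k e => gv k ^ e)
            = m.prod fun k e => (π (X k)) ^ e := by
          rw [Finsupp.prod, Finsupp.prod, map_prod]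
          apply Finset.prod_congr rfl
          intro k hk
          rw [map_pow]
          congr 1
          have hkle : ¬ j < k := fun hc => by
            have := hf m hm k hc
            exact absurd this (by simpa [Finsupp.mem_support_iff] using hk)
          rcases lt_or_eq_of_le (le_of_not_gt hkle) with hlt | heq
          · rw [hgv]
            simp only [dif_pos hlt]
            rw [Polynomial.aeval_C]
            rfl
          · rw [hgv]
            have hnlt : ¬ k < j := by rw [heq]; exact lt_irrefl j
            simp only [dif_neg hnlt, if_pos heq]
            rw [Polynomial.aeval_X, heq]
        rw [hprod]
        rw [monomial_eq, map_mul]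
        congr 1
        · rw [← MvPolynomial.algebraMap_eq, AlgHom.commutes]
        · rw [map_finsuppProd]
          apply Finsupp.prod_congr
          intro k hk
          rw [map_pow]
      calc Polynomial.aeval (π (X j)) (φ f)
          = ∑ m ∈ f.support, Polynomial.aeval (π (X j)) (φ (monomial m (coeff m f))) := by
            rw [← map_sum, ← map_sum, support_sum_monomial_coeff]
        _ = ∑ m ∈ f.support, π (monomial m (coeff m f)) :=
            Finset.sum_congr rfl hmono
        _ = π f := by rw [← map_sum, support_sum_monomial_coeff]
    have hφXj : φ (X j) = Polynomial.X := by
      rw [hφ, eval₂Hom_X', hgv]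
      simp [lt_irrefl]
    have hdeg : (φ r).natDegree ≤ d - 1 := by
      have hsup : ∀ m ∈ r.support, m j < d := (degreeOf_lt_iff hd).mp hrd
      conv_lhs => rw [← support_sum_monomial_coeff r, map_sum]
      apply Polynomial.natDegree_sum_le_of_forall_le
      intro m hm
      rw [hφ, eval₂Hom_monomial]
      apply le_trans (Polynomial.natDegree_mul_le)
      have h1 : (((Polynomial.C : S →+* Polynomial S).comp (algebraMap ℚ S))
          (coeff m r)).natDegree = 0 := Polynomial.natDegree_C _
      rw [h1, zero_add, Finsupp.prod]
      apply le_trans (Polynomial.natDegree_prod_le _ _)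
      have hterm : ∀ k ∈ m.support, (gv k ^ m k).natDegree ≤ if k = j then m j else 0 := by
        intro k hk
        rcases eq_or_ne k j with rfl | hkj
        · rw [if_pos rfl, hgv]
          simp only [dif_neg (lt_irrefl k), if_pos rfl]
          calc (Polynomial.X ^ m k : Polynomial S).natDegree
              ≤ m k * (Polynomial.X : Polynomial S).natDegree := Polynomial.natDegree_pow_le
            _ ≤ m k * 1 := Nat.mul_le_mul_left _ Polynomial.natDegree_X_le
            _ = m k := Nat.mul_one _
        · rw [if_neg hkj, hgv]
          rcases lt_or_ge k j with hlt | hle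
          · simp only [dif_pos hlt]
            apply le_trans Polynomial.natDegree_pow_le
            simp [Polynomial.natDegree_C]
          · have hnlt : ¬ k < j := not_lt.mpr hle
            simp only [dif_neg hnlt, if_neg hkj]
            apply le_trans Polynomial.natDegree_pow_le
            simp
      calc ∑ k ∈ m.support, (gv k ^ m k).natDegree
          ≤ ∑ k ∈ m.support, (if k = j then m j else 0) := Finset.sum_le_sum hterm
        _ ≤ m j := by
            rw [Finset.sum_ite_eq' m.support j (fun _ => m j)]
            split <;> simp
        _ ≤ d - 1 := by have := hsup m hm; omega
    have hmonic : (φ (t j)).Monic := by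
      rw [htj, map_add, map_pow, hφXj]
      rcases Nat.exists_eq_succ_of_ne_zero (Nat.pos_iff_ne_zero.mp hd) with ⟨e, he⟩
      rw [he]
      apply Polynomial.monic_X_pow_add
      have h0 : (φ r).degree ≤ ((e : ℕ) : WithBot ℕ) := by
        apply le_trans Polynomial.degree_le_natDegree
        exact_mod_cast (by omega : (φ r).natDegree ≤ e)
      exact lt_of_le_of_lt h0 (by exact_mod_cast Nat.lt_succ_self e)
    have hz : Polynomial.aeval (π (X j)) (φ (t j)) = 0 := by
      rw [heval (t j) ?_, hzero j]
      intro m hm k hk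
      have h0 := hhigh k hk
      have hle : m k ≤ degreeOf k (t j) := by
        rw [degreeOf_eq_sup]
        exact Finset.le_sup (f := fun m => m k) hm
      omega
    have hint : IsIntegral S (π (X j)) := by
      refine ⟨φ (t j), hmonic, ?_⟩
      rw [← Polynomial.aeval_def]
      exact hz
    exact isIntegral_trans (π (X j)) hint

theorem moduleFinite_of_triangular (t : Fin n → MvPolynomial (Fin n) ℚ)
    (ht : IsTriangularSet t) :
    Module.Finite ℚ (MvPolynomial (Fin n) ℚ ⧸ Ideal.span (Set.range t)) := by
  classical
  set J := Ideal.span (Set.range t) with hJdef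
  set π : MvPolynomial (Fin n) ℚ →ₐ[ℚ] (MvPolynomial (Fin n) ℚ ⧸ J) :=
    Ideal.Quotient.mkₐ ℚ J with hπdef
  have key := integral_of_triangular t ht π (fun i => by
    rw [hπdef]
    simp only [Ideal.Quotient.mkₐ_eq_mk]
    rw [Ideal.Quotient.eq_zero_iff_mem]
    exact Ideal.subset_span (Set.mem_range_self i))
  have hadj : Algebra.adjoin ℚ (Set.range fun k : Fin n => π (X k)) = ⊤ := by
    have h1 : (Set.range fun k : Fin n => π (X k)) = π '' (Set.range X) := by
      rw [← Set.range_comp]; rfl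
    rw [h1, Algebra.adjoin_image]
    rw [MvPolynomial.adjoin_range_X (R := ℚ) (σ := Fin n)]
    rw [Algebra.map_top]
    rw [AlgHom.range_eq_top]
    exact Ideal.Quotient.mkₐ_surjective ℚ J
  refine ⟨?_⟩
  rw [← Algebra.top_toSubmodule, ← hadj]
  exact fg_adjoin_of_finite (Set.finite_range _)
    (by rintro x ⟨k, rfl⟩; exact key n k k.isLt)
end E

section F

set_option maxHeartbeats 1600000 in
set_option synthInstance.maxHeartbeats 400000 in
theorem bezout_of_gcdMod {n : ℕ} (t : Fin n → MvPolynomial (Fin n) ℚ)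
    (ht : IsTriangularSet t) (hrad : (Ideal.span (Set.range t)).IsRadical)
    (a b g : Polynomial (MvPolynomial (Fin n) ℚ))
    (hg : IsGcdMod (Ideal.span (Set.range t)) a b g) :
    ∃ u v : Polynomial (MvPolynomial (Fin n) ℚ),
      g - (a * u + b * v) ∈
        Ideal.map (Polynomial.C : _ →+* Polynomial (MvPolynomial (Fin n) ℚ))
          (Ideal.span (Set.range t)) := by
  classical
  set J := Ideal.span (Set.range t) with hJdef
  set Q := MvPolynomial (Fin n) ℚ ⧸ J with hQdef
  haveI : IsReduced Q := (Ideal.isRadical_iff_quotient_reduced J).mp hrad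
  haveI : Module.Finite ℚ Q := moduleFinite_of_triangular t ht
  haveI : IsArtinianRing Q := IsArtinianRing.of_finite ℚ Q
  let e : Q ≃+* ∀ I : MaximalSpectrum Q, Q ⧸ I.asIdeal := (IsArtinianRing.equivPi Q).toRingEquiv
  let ε : Polynomial Q ≃+* ∀ I : MaximalSpectrum Q, @Polynomial (Q ⧸ I.asIdeal) CommSemiring.toSemiring :=
    (Polynomial.mapEquiv e).trans (Polynomial.piEquiv _)
  set mk := Ideal.Quotient.mk J with hmk
  -- dvd transfer
  have hdvd_of : ∀ x y : Polynomial Q, (∀ I, ε x I ∣ ε y I) → x ∣ y := by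
    intro x y h
    choose c hc using h
    refine ⟨ε.symm c, ?_⟩
    apply ε.injective
    rw [map_mul, RingEquiv.apply_symm_apply]
    funext I
    exact hc I
  have hdvd_to : ∀ x y : Polynomial Q, x ∣ y → ∀ I, ε x I ∣ ε y I := by
    rintro x y ⟨c, rfl⟩ I
    exact ⟨ε c I, by rw [map_mul]; rfl⟩
  -- transferred gcd conditions
  have hga : Polynomial.map mk g ∣ Polynomial.map mk a := (dvdMod_iff J g a).mp hg.1
  have hgb : Polynomial.map mk g ∣ Polynomial.map mk b := (dvdMod_iff J g b).mp hg.2.1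
  have hmax : ∀ dd : Polynomial Q,
      dd ∣ Polynomial.map mk a → dd ∣ Polynomial.map mk b → dd ∣ Polynomial.map mk g := by
    intro dd h1 h2
    obtain ⟨d, rfl⟩ := Polynomial.map_surjective mk Ideal.Quotient.mk_surjective dd
    exact (dvdMod_iff J d g).mp
      (hg.2.2 d ((dvdMod_iff J d a).mpr h1) ((dvdMod_iff J d b).mpr h2))
  set A := ε (Polynomial.map mk a) with hA
  set B := ε (Polynomial.map mk b) with hB
  set G := ε (Polynomial.map mk g) with hG
  -- per-component generator of the ideal (A I, B I)
  have hprin : ∀ I : MaximalSpectrum Q,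
      (Ideal.span {A I, B I} : Ideal (@Polynomial (Q ⧸ I.asIdeal) CommSemiring.toSemiring)).IsPrincipal :=
    fun I => by letI := Ideal.Quotient.field I.asIdeal; exact IsPrincipalIdealRing.principal _
  set gen : ∀ I : MaximalSpectrum Q, @Polynomial (Q ⧸ I.asIdeal) CommSemiring.toSemiring :=
    fun I => Submodule.IsPrincipal.generator (Ideal.span {A I, B I}) with hgen
  have hgen_dvd_A : ∀ I, gen I ∣ A I := by
    intro I
    haveI := hprin I
    rw [← Ideal.mem_span_singleton,
      Ideal.span_singleton_generator (Ideal.span {A I, B I})]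
    exact Ideal.subset_span (Set.mem_insert _ _)
  have hgen_dvd_B : ∀ I, gen I ∣ B I := by
    intro I
    haveI := hprin I
    rw [← Ideal.mem_span_singleton,
      Ideal.span_singleton_generator (Ideal.span {A I, B I})]
    exact Ideal.subset_span (Set.mem_insert_of_mem _ rfl)
  set dd : Polynomial Q := ε.symm gen with hdd
  have hddA : dd ∣ Polynomial.map mk a := by
    apply hdvd_of
    intro I
    rw [hdd, RingEquiv.apply_symm_apply]
    exact hgen_dvd_A I
  have hddB : dd ∣ Polynomial.map mk b := by
    apply hdvd_of
    intro I
    rw [hdd, RingEquiv.apply_symm_apply]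
    exact hgen_dvd_B I
  have hddG : dd ∣ Polynomial.map mk g := hmax dd hddA hddB
  have hGmem : ∀ I, ∃ u v, u * A I + v * B I = G I := by
    intro I
    rw [← Ideal.mem_span_pair]
    have h1 : G I ∈ Ideal.span {gen I} := by
      rw [Ideal.mem_span_singleton]
      have := hdvd_to dd (Polynomial.map mk g) hddG I
      rwa [hdd, RingEquiv.apply_symm_apply] at this
    haveI := hprin I
    rwa [Ideal.span_singleton_generator (Ideal.span {A I, B I})] at h1
  choose u v huv using hGmem
  set U := ε.symm u with hU
  set V := ε.symm v with hV
  have hkey : Polynomial.map mk g =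
      Polynomial.map mk a * U + Polynomial.map mk b * V := by
    apply ε.injective
    rw [map_add, map_mul, map_mul, hU, hV, RingEquiv.apply_symm_apply,
      RingEquiv.apply_symm_apply]
    funext I
    have h2 := huv I
    rw [hA, hB, hG] at h2
    simp only [Pi.add_apply, Pi.mul_apply]
    rw [← h2]
    ring
  obtain ⟨u', hu'⟩ := Polynomial.map_surjective mk Ideal.Quotient.mk_surjective U
  obtain ⟨v', hv'⟩ := Polynomial.map_surjective mk Ideal.Quotient.mk_surjective V
  refine ⟨u', v', ?_⟩
  have hker : RingHom.ker (Polynomial.mapRingHom mk) =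
      Ideal.map (Polynomial.C : _ →+* Polynomial (MvPolynomial (Fin n) ℚ)) J := by
    rw [Polynomial.ker_mapRingHom, Ideal.mk_ker]
  rw [← hker, RingHom.mem_ker]
  simp only [Polynomial.coe_mapRingHom, Polynomial.map_sub, Polynomial.map_add,
    Polynomial.map_mul, hu', hv']
  rw [hkey]
  ring

end F

section G

variable {n : ℕ}

-- dividing by the unit D² modulo p
lemma div_scalar_mem {p D : ℕ} (hp : p.Prime) (hpD : ¬ p ∣ D)
    {x : Polynomial (MvPolynomial (Fin n) (ZMod p))}
    {I : Ideal (Polynomial (MvPolynomial (Fin n) (ZMod p)))}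
    (h : ((D * D : ℕ)) • x ∈ I) : x ∈ I := by
  haveI : Fact p.Prime := ⟨hp⟩
  have hD0 : (D : ZMod p) ≠ 0 := by
    rw [Ne, ZMod.natCast_eq_zero_iff]
    exact hpD
  set κ : ZMod p →+* Polynomial (MvPolynomial (Fin n) (ZMod p)) :=
    (Polynomial.C : MvPolynomial (Fin n) (ZMod p) →+* _).comp
      (MvPolynomial.C : ZMod p →+* MvPolynomial (Fin n) (ZMod p)) with hκ
  have hx : x = κ (((D : ZMod p))⁻¹ ^ 2) * ((D * D : ℕ) • x) := by
    rw [nsmul_eq_mul, ← mul_assoc, ← map_natCast κ (D * D), ← map_mul]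
    have : ((D : ZMod p))⁻¹ ^ 2 * ((D * D : ℕ) : ZMod p) = 1 := by
      push_cast
      field_simp
    rw [this, map_one, one_mul]
  rw [hx]
  exact Ideal.mul_mem_left _ _ h

lemma sum_lift_mem {p D : ℕ} (hp : p.Prime) (hpD : ¬ p ∣ D) (hD : 0 < D)
    {c tt : Fin n → Polynomial (MvPolynomial (Fin n) ℚ)}
    {Cz Tz : Fin n → Polynomial (MvPolynomial (Fin n) ℤ)}
    (hCz : ∀ i, (D : ℕ) • c i = Polynomial.map (MvPolynomial.map (Int.castRingHom ℚ)) (Cz i))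
    (hTz : ∀ i, (D : ℕ) • tt i = Polynomial.map (MvPolynomial.map (Int.castRingHom ℚ)) (Tz i)) :
    Polynomial.map (MvPolynomial.map (Int.castRingHom (ZMod p))) (∑ i, Cz i * Tz i)
      ∈ Ideal.span (Set.range fun i => redPolyX p (tt i)) := by
  rw [Polynomial.map_sum]
  apply Ideal.sum_mem
  intro i _
  rw [Polynomial.map_mul, ← redPolyX_good hp hpD hD (hTz i)]
  rw [mul_smul_comm, nsmul_eq_mul]
  exact Ideal.mul_mem_left _ _
    (Ideal.mul_mem_left _ _ (Ideal.subset_span (Set.mem_range_self i)))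

/-- For a radical zero-dimensional triangular set `T` over `ℚ` and a componentwise gcd `g` of
`a, b`, only finitely many primes are unlucky: for all but finitely many primes `p`, the
reduction of `g` mod `p` remains a componentwise gcd of `a mod p` and `b mod p`. -/
theorem finitely_many_unlucky_primes {n : ℕ} (t : Fin n → MvPolynomial (Fin n) ℚ)
    (ht : IsTriangularSet t) (hrad : (Ideal.span (Set.range t)).IsRadical)
    (a b g : Polynomial (MvPolynomial (Fin n) ℚ))
    (hg : IsGcdMod (Ideal.span (Set.range t)) a b g) :
    {p : ℕ | p.Prime ∧
      ¬ IsGcdMod (Ideal.span (Set.range fun i => redMv p (t i)))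
          (redPolyX p a) (redPolyX p b) (redPolyX p g)}.Finite := by
  classical
  set J := Ideal.span (Set.range t) with hJdef
  -- certificates over ℚ
  obtain ⟨qa, hqa⟩ := hg.1
  obtain ⟨qb, hqb⟩ := hg.2.1
  obtain ⟨u, v, huv⟩ := bezout_of_gcdMod t ht hrad a b g hg
  have hspan : Ideal.map (Polynomial.C : _ →+* Polynomial (MvPolynomial (Fin n) ℚ)) J
      = Ideal.span (Set.range fun i => Polynomial.C (t i)) := by
    rw [hJdef, Ideal.map_span, ← Set.range_comp]
    rfl
  rw [hspan, Ideal.mem_span_range_iff_exists_fun] at hqa hqb huv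
  obtain ⟨c1, hc1⟩ := hqa
  obtain ⟨c2, hc2⟩ := hqb
  obtain ⟨c3, hc3⟩ := huv
  -- common denominator
  obtain ⟨D, hD, hLift⟩ := intlift_list
    ([a, b, g, qa, qb, u, v] ++ (List.ofFn fun i => c1 i) ++ (List.ofFn fun i => c2 i)
      ++ (List.ofFn fun i => c3 i) ++ (List.ofFn fun i => Polynomial.C (t i)))
  obtain ⟨Az, hAz⟩ := hLift a (by simp)
  obtain ⟨Bz, hBz⟩ := hLift b (by simp)
  obtain ⟨Gz, hGz⟩ := hLift g (by simp)
  obtain ⟨QAz, hQAz⟩ := hLift qa (by simp)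
  obtain ⟨QBz, hQBz⟩ := hLift qb (by simp)
  obtain ⟨Uz, hUz⟩ := hLift u (by simp)
  obtain ⟨Vz, hVz⟩ := hLift v (by simp)
  have hC1 : ∀ i, ∃ F, (D : ℕ) • c1 i
      = Polynomial.map (MvPolynomial.map (Int.castRingHom ℚ)) F := by
    intro i; exact hLift (c1 i) (by simp [List.mem_ofFn])
  have hC2 : ∀ i, ∃ F, (D : ℕ) • c2 i
      = Polynomial.map (MvPolynomial.map (Int.castRingHom ℚ)) F := by
    intro i; exact hLift (c2 i) (by simp [List.mem_ofFn])
  have hC3 : ∀ i, ∃ F, (D : ℕ) • c3 i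
      = Polynomial.map (MvPolynomial.map (Int.castRingHom ℚ)) F := by
    intro i; exact hLift (c3 i) (by simp [List.mem_ofFn])
  have hT : ∀ i, ∃ F, (D : ℕ) • Polynomial.C (t i)
      = Polynomial.map (MvPolynomial.map (Int.castRingHom ℚ)) F := by
    intro i; exact hLift (Polynomial.C (t i)) (by simp [List.mem_ofFn])
  choose C1z hC1z using hC1
  choose C2z hC2z using hC2
  choose C3z hC3z using hC3
  choose Tz hTz using hT
  -- injectivity of the integral embedding
  have hinj : Function.Injective
      (Polynomial.map (MvPolynomial.map (Int.castRingHom ℚ)) :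
        Polynomial (MvPolynomial (Fin n) ℤ) → Polynomial (MvPolynomial (Fin n) ℚ)) :=
    Polynomial.map_injective _ (MvPolynomial.map_injective _ Int.cast_injective)
  -- the three integral identities
  have hZ1 : (D : ℕ) • Az - Gz * QAz = ∑ i, C1z i * Tz i := by
    apply hinj
    rw [Polynomial.map_sub, Polynomial.map_mul, Polynomial.map_sum]
    have e1 : Polynomial.map (MvPolynomial.map (Int.castRingHom ℚ)) ((D : ℕ) • Az)
        = (D : ℕ) • ((D : ℕ) • a) := by
      rw [← Polynomial.coe_mapRingHom, map_nsmul, Polynomial.coe_mapRingHom, ← hAz]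
    rw [e1, ← hGz, ← hQAz]
    have e2 : ∀ i, Polynomial.map (MvPolynomial.map (Int.castRingHom ℚ)) (C1z i * Tz i)
        = ((D * D : ℕ)) • (c1 i * Polynomial.C (t i)) := by
      intro i
      rw [Polynomial.map_mul, ← hC1z, ← hTz, smul_mul_smul_comm]
    simp only [e2]
    rw [← Finset.smul_sum, hc1, smul_mul_smul_comm, ← mul_smul, smul_sub]
  have hZ2 : (D : ℕ) • Bz - Gz * QBz = ∑ i, C2z i * Tz i := by
    apply hinj
    rw [Polynomial.map_sub, Polynomial.map_mul, Polynomial.map_sum]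
    have e1 : Polynomial.map (MvPolynomial.map (Int.castRingHom ℚ)) ((D : ℕ) • Bz)
        = (D : ℕ) • ((D : ℕ) • b) := by
      rw [← Polynomial.coe_mapRingHom, map_nsmul, Polynomial.coe_mapRingHom, ← hBz]
    rw [e1, ← hGz, ← hQBz]
    have e2 : ∀ i, Polynomial.map (MvPolynomial.map (Int.castRingHom ℚ)) (C2z i * Tz i)
        = ((D * D : ℕ)) • (c2 i * Polynomial.C (t i)) := by
      intro i
      rw [Polynomial.map_mul, ← hC2z, ← hTz, smul_mul_smul_comm]
    simp only [e2]
    rw [← Finset.smul_sum, hc2, smul_mul_smul_comm, ← mul_smul, smul_sub]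
  have hZ3 : (D : ℕ) • Gz - (Az * Uz + Bz * Vz) = ∑ i, C3z i * Tz i := by
    apply hinj
    rw [Polynomial.map_sub, Polynomial.map_add, Polynomial.map_mul, Polynomial.map_mul,
      Polynomial.map_sum]
    have e1 : Polynomial.map (MvPolynomial.map (Int.castRingHom ℚ)) ((D : ℕ) • Gz)
        = (D : ℕ) • ((D : ℕ) • g) := by
      rw [← Polynomial.coe_mapRingHom, map_nsmul, Polynomial.coe_mapRingHom, ← hGz]
    rw [e1, ← hAz, ← hBz, ← hUz, ← hVz]
    have e2 : ∀ i, Polynomial.map (MvPolynomial.map (Int.castRingHom ℚ)) (C3z i * Tz i)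
        = ((D * D : ℕ)) • (c3 i * Polynomial.C (t i)) := by
      intro i
      rw [Polynomial.map_mul, ← hC3z, ← hTz, smul_mul_smul_comm]
    simp only [e2]
    rw [← Finset.smul_sum, hc3]
    rw [smul_mul_smul_comm, smul_mul_smul_comm, ← smul_add, ← mul_smul, smul_sub]
  -- main claim about good primes
  have main : ∀ p : ℕ, p.Prime → ¬ p ∣ D →
      IsGcdMod (Ideal.span (Set.range fun i => redMv p (t i)))
        (redPolyX p a) (redPolyX p b) (redPolyX p g) := by
    intro p hp hpD
    set Jp := Ideal.span (Set.range fun i => redMv p (t i)) with hJp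
    have hmapspan : Ideal.map
        (Polynomial.C : _ →+* Polynomial (MvPolynomial (Fin n) (ZMod p))) Jp
        = Ideal.span (Set.range fun i => redPolyX p (Polynomial.C (t i))) := by
      rw [hJp, Ideal.map_span, ← Set.range_comp]
      have : ((Polynomial.C : _ →+* Polynomial (MvPolynomial (Fin n) (ZMod p)))
          ∘ fun i => redMv p (t i)) = fun i => redPolyX p (Polynomial.C (t i)) := by
        funext i
        exact (redPolyX_C p (t i)).symm
      rw [this]
    set ρ : Polynomial (MvPolynomial (Fin n) ℤ) → Polynomial (MvPolynomial (Fin n) (ZMod p)) :=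
      Polynomial.map (MvPolynomial.map (Int.castRingHom (ZMod p))) with hρ
    -- mod-p reductions of the certificates
    have hredA := redPolyX_good hp hpD hD hAz
    have hredB := redPolyX_good hp hpD hD hBz
    have hredG := redPolyX_good hp hpD hD hGz
    have hredQA := redPolyX_good hp hpD hD hQAz
    have hredQB := redPolyX_good hp hpD hD hQBz
    have hredU := redPolyX_good hp hpD hD hUz
    have hredV := redPolyX_good hp hpD hD hVz
    -- divisibility 1
    have hdvd1 : redPolyX p a - redPolyX p g * redPolyX p qa
        ∈ Ideal.map (Polynomial.C : _ →+* _) Jp := by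
      apply div_scalar_mem hp hpD
      have hρ1 : ρ ((D : ℕ) • Az - Gz * QAz)
          = (D * D : ℕ) • (redPolyX p a - redPolyX p g * redPolyX p qa) := by
        rw [hρ, Polynomial.map_sub, Polynomial.map_mul, ← Polynomial.coe_mapRingHom,
          map_nsmul, Polynomial.coe_mapRingHom, ← hredA, ← hredG, ← hredQA]
        rw [smul_mul_smul_comm, ← mul_smul, smul_sub]
      rw [← hρ1, hZ1, hmapspan]
      exact sum_lift_mem hp hpD hD hC1z hTz
    have hdvd2 : redPolyX p b - redPolyX p g * redPolyX p qb
        ∈ Ideal.map (Polynomial.C : _ →+* _) Jp := by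
      apply div_scalar_mem hp hpD
      have hρ2 : ρ ((D : ℕ) • Bz - Gz * QBz)
          = (D * D : ℕ) • (redPolyX p b - redPolyX p g * redPolyX p qb) := by
        rw [hρ, Polynomial.map_sub, Polynomial.map_mul, ← Polynomial.coe_mapRingHom,
          map_nsmul, Polynomial.coe_mapRingHom, ← hredB, ← hredG, ← hredQB]
        rw [smul_mul_smul_comm, ← mul_smul, smul_sub]
      rw [← hρ2, hZ2, hmapspan]
      exact sum_lift_mem hp hpD hD hC2z hTz
    have hdvd3 : redPolyX p g - (redPolyX p a * redPolyX p u + redPolyX p b * redPolyX p v)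
        ∈ Ideal.map (Polynomial.C : _ →+* _) Jp := by
      apply div_scalar_mem hp hpD
      have hρ3 : ρ ((D : ℕ) • Gz - (Az * Uz + Bz * Vz))
          = (D * D : ℕ) • (redPolyX p g
              - (redPolyX p a * redPolyX p u + redPolyX p b * redPolyX p v)) := by
        rw [hρ, Polynomial.map_sub, Polynomial.map_add, Polynomial.map_mul, Polynomial.map_mul,
          ← Polynomial.coe_mapRingHom, map_nsmul, Polynomial.coe_mapRingHom,
          ← hredA, ← hredB, ← hredG, ← hredU, ← hredV]
        rw [smul_mul_smul_comm, smul_mul_smul_comm, ← smul_add, ← mul_smul, smul_sub]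
      rw [← hρ3, hZ3, hmapspan]
      exact sum_lift_mem hp hpD hD hC3z hTz
    refine ⟨⟨redPolyX p qa, hdvd1⟩, ⟨redPolyX p qb, hdvd2⟩, ?_⟩
    rintro d ⟨q1, h1⟩ ⟨q2, h2⟩
    refine ⟨q1 * redPolyX p u + q2 * redPolyX p v, ?_⟩
    have hdecomp : redPolyX p g - d * (q1 * redPolyX p u + q2 * redPolyX p v)
        = (redPolyX p g
            - (redPolyX p a * redPolyX p u + redPolyX p b * redPolyX p v))
          + (redPolyX p a - d * q1) * redPolyX p u
          + (redPolyX p b - d * q2) * redPolyX p v := by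
      ring
    rw [hdecomp]
    exact Ideal.add_mem _ (Ideal.add_mem _ hdvd3 (Ideal.mul_mem_right _ _ h1))
      (Ideal.mul_mem_right _ _ h2)
  -- conclude finiteness
  apply Set.Finite.subset (Set.finite_Iic D)
  intro p hp
  rcases hp with ⟨hprime, hbad⟩
  by_contra hle
  have hnd : ¬ p ∣ D := by
    intro hdvd
    exact hle (Nat.le_of_dvd hD hdvd)
  exact hbad (main p hprime hnd)
end G
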